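/- arXiv:1812.03949 — 4 statements merged into one kernel-verified Lean document; each statement's English description precedes it below -/
import Mathlib

section
/- Let p > 1 and set p̄ = min(2,p), f(u) = |u|^{p-1} u, F(u) = |u|^{p+1}/(p+1). There is a constant C > 0 depending only on p such that for all u > 0 and all v ∈ ℝ, |F(u+v) - F(u) - F'(u)v - ½F''(u)v²| ≤ C(|v|^{p+1} + u^{p-p̄}|v|^{p̄+1}). -/
open Real
lemma ratio_bound (p c u : ℝ) (hp : 1 < p) (hu : 0 < u) (h1 : u/2 ≤ c) (h2 : c ≤ 3*u/2) :
    c ^ (p-2) ≤ (2^p + 2) * u^(p-2) := by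
  have hc : 0 < c := lt_of_lt_of_le (by linarith) h1
  have hr : c = u * (c/u) := by field_simp
  have hru : (0:ℝ) < c/u := div_pos hc hu
  have hr1 : (1:ℝ)/2 ≤ c/u := by rw [div_le_div_iff₀ (by norm_num) hu]; linarith
  have hr2 : c/u ≤ 3/2 := by rw [div_le_div_iff₀ hu (by norm_num)]; linarith
  have key : (c/u) ^ (p-2) ≤ 2^p + 2 := by
    rcases le_or_gt 0 (p-2) with h | h
    · have : (c/u) ^ (p-2) ≤ (2:ℝ) ^ (p-2) :=
        Real.rpow_le_rpow hru.le (by linarith) h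
      have h2p : (2:ℝ) ^ (p-2) ≤ 2^p := Real.rpow_le_rpow_of_exponent_le one_le_two (by linarith)
      nlinarith [Real.rpow_nonneg (le_of_lt hru) (p-2)]
    · have : (c/u) ^ (p-2) ≤ ((1:ℝ)/2) ^ (p-2) :=
        Real.rpow_le_rpow_of_nonpos (by norm_num) hr1 h.le
      have heq : ((1:ℝ)/2) ^ (p-2) = (2:ℝ) ^ (2-p) := by
        rw [show (1:ℝ)/2 = 2⁻¹ by norm_num, Real.inv_rpow (by norm_num),
          ← Real.rpow_neg (by norm_num), show -(p-2) = 2-p by ring]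
      have h2p : (2:ℝ) ^ (2-p) ≤ 2^p := Real.rpow_le_rpow_of_exponent_le one_le_two (by linarith)
      calc (c/u) ^ (p-2) ≤ ((1:ℝ)/2) ^ (p-2) := this
        _ = (2:ℝ) ^ (2-p) := heq
        _ ≤ 2^p := h2p
        _ ≤ 2^p + 2 := by linarith
  calc c ^ (p-2) = (u * (c/u)) ^ (p-2) := by rw [← hr]
    _ = u ^ (p-2) * (c/u) ^ (p-2) := Real.mul_rpow hu.le hru.le
    _ ≤ u ^ (p-2) * (2^p + 2) := by
        exact mul_le_mul_of_nonneg_left key (Real.rpow_nonneg hu.le _)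
    _ = (2^p + 2) * u^(p-2) := by ring
lemma case1 (p u v : ℝ) (hp : 1 < p) (hu : 0 < u) (hv : |v| ≤ u/2)
    (rb : ∀ c, u/2 ≤ c → c ≤ 3*u/2 → c ^ (p-2) ≤ (2^p + 2) * u^(p-2)) :
    |(u+v)^(p+1)/(p+1) - u^(p+1)/(p+1) - u^p*v - (1/2)*(p*u^(p-1))*v^2|
      ≤ p^2*(2^p+2)*u^(p-2)*|v|^3 := by
  set s : Set ℝ := Set.uIcc (0:ℝ) v with hs
  have hts : ∀ t ∈ s, |t| ≤ |v| := by
    intro t ht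
    rcases Set.mem_uIcc.mp ht with ⟨h1, h2⟩ | ⟨h1, h2⟩
    · rw [abs_of_nonneg h1]; exact h2.trans (le_abs_self v)
    · rw [abs_of_nonpos h2]; exact (neg_le_neg h1).trans (neg_le_abs v)
  have hpos : ∀ t ∈ s, u/2 ≤ u + t ∧ u + t ≤ 3*u/2 := by
    intro t ht
    have := hts t ht
    have h := abs_le.mp (this.trans hv)
    constructor <;> linarith [h.1, h.2]
  have hne : ∀ t ∈ s, u + t ≠ 0 := by
    intro t ht; have := (hpos t ht).1; intro h; rw [h] at this; linarith
  set M : ℝ := p*((2^p+2)*u^(p-2)) with hM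
  have hMnn : 0 ≤ M := by
    have : (0:ℝ) ≤ (2^p+2)*u^(p-2) := by positivity
    have hp0 : (0:ℝ) ≤ p := by linarith
    exact mul_nonneg hp0 this
  have hv0 : (0:ℝ) ∈ s := Set.left_mem_uIcc
  have hvv : v ∈ s := Set.right_mem_uIcc
  -- step A : G t := (u+t)^(p-1) - u^(p-1)
  have hG : ∀ t ∈ s, HasDerivWithinAt (fun t => (u+t)^(p-1) - u^(p-1))
      (1*(p-1)*(u+t)^(p-1-1)) s t := by
    intro t ht
    exact ((((hasDerivAt_id t).const_add u).rpow_const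
      (Or.inl (hne t ht))).sub_const _).hasDerivWithinAt
  have hGb : ∀ t ∈ s, ‖1*(p-1)*(u+t)^(p-1-1)‖ ≤ M := by
    intro t ht
    have h1 := (hpos t ht).1
    have h2 := (hpos t ht).2
    have hb := rb (u+t) h1 h2
    have hnn : (0:ℝ) ≤ (u+t) ^ (p-2) := Real.rpow_nonneg (by linarith) _
    rw [Real.norm_eq_abs, show p-1-1 = p-2 by ring, one_mul,
      abs_of_nonneg (mul_nonneg (by linarith) hnn)]
    exact mul_le_mul (by linarith) hb hnn (by linarith)
  have hGest : ∀ t ∈ s, |(u+t)^(p-1) - u^(p-1)| ≤ M * |v| := by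
    intro t ht
    have := Convex.norm_image_sub_le_of_norm_hasDerivWithin_le hG hGb
      (convex_uIcc 0 v) hv0 ht
    simp only [add_zero, sub_self, sub_zero, Real.norm_eq_abs] at this
    exact this.trans (mul_le_mul_of_nonneg_left (hts t ht) hMnn)
  -- step B : H1 t := (u+t)^p - u^p - p*u^(p-1)*t
  have hH1 : ∀ t ∈ s, HasDerivWithinAt (fun t => (u+t)^p - u^p - p*u^(p-1)*t)
      (p * ((u+t)^(p-1) - u^(p-1))) s t := by
    intro t ht
    have d1 : HasDerivAt (fun t => (u+t)^p - u^p - p*u^(p-1)*t)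
        (1*p*(u+t)^(p-1) - p*u^(p-1)*1) t := by
      exact ((((hasDerivAt_id t).const_add u).rpow_const
        (Or.inl (hne t ht))).sub_const _).sub ((hasDerivAt_id t).const_mul _)
    have : 1*p*(u+t)^(p-1) - p*u^(p-1)*1 = p * ((u+t)^(p-1) - u^(p-1)) := by ring
    rw [this] at d1
    exact d1.hasDerivWithinAt
  have hH1b : ∀ t ∈ s, ‖p * ((u+t)^(p-1) - u^(p-1))‖ ≤ p * (M * |v|) := by
    intro t ht
    rw [Real.norm_eq_abs, abs_mul, abs_of_nonneg (by linarith : (0:ℝ) ≤ p)]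
    exact mul_le_mul_of_nonneg_left (hGest t ht) (by linarith)
  have hH1est : ∀ t ∈ s, |(u+t)^p - u^p - p*u^(p-1)*t| ≤ p * (M * |v|) * |v| := by
    intro t ht
    have := Convex.norm_image_sub_le_of_norm_hasDerivWithin_le hH1 hH1b
      (convex_uIcc 0 v) hv0 ht
    simp only [add_zero, sub_self, mul_zero, sub_zero, Real.norm_eq_abs] at this
    refine this.trans (mul_le_mul_of_nonneg_left (hts t ht) ?_)
    have : (0:ℝ) ≤ M * |v| := mul_nonneg hMnn (abs_nonneg v)
    exact mul_nonneg (by linarith) this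
  -- step C : H t
  have hp1 : (0:ℝ) < p + 1 := by linarith
  have hH : ∀ t ∈ s, HasDerivWithinAt
      (fun t => (u+t)^(p+1)/(p+1) - u^(p+1)/(p+1) - u^p*t - (1/2)*(p*u^(p-1))*t^2)
      ((u+t)^p - u^p - p*u^(p-1)*t) s t := by
    intro t ht
    have d1 : HasDerivAt
        (fun t => (u+t)^(p+1)/(p+1) - u^(p+1)/(p+1) - u^p*t - (1/2)*(p*u^(p-1))*t^2)
        ((1*(p+1)*(u+t)^(p+1-1))/(p+1) - u^p*1 - (1/2)*(p*u^(p-1))*(↑2*t^1)) t := by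
      exact (((((((hasDerivAt_id t).const_add u).rpow_const
        (Or.inl (hne t ht))).div_const _).sub_const _).sub
        ((hasDerivAt_id t).const_mul _)).sub ((hasDerivAt_pow 2 t).const_mul _))
    have he : (1*(p+1)*(u+t)^(p+1-1))/(p+1) - u^p*1 - (1/2)*(p*u^(p-1))*(↑2*t^1)
        = (u+t)^p - u^p - p*u^(p-1)*t := by
      rw [show p+1-1 = p by ring]
      push_cast
      field_simp
    rw [he] at d1
    exact d1.hasDerivWithinAt
  have hHb : ∀ t ∈ s, ‖(u+t)^p - u^p - p*u^(p-1)*t‖ ≤ p * (M * |v|) * |v| := by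
    intro t ht; rw [Real.norm_eq_abs]; exact hH1est t ht
  have final := Convex.norm_image_sub_le_of_norm_hasDerivWithin_le hH hHb
    (convex_uIcc 0 v) hv0 hvv
  simp only [add_zero, sub_self, mul_zero, zero_pow, sub_zero, Real.norm_eq_abs,
    ne_eq, OfNat.ofNat_ne_zero, not_false_eq_true] at final
  calc |(u+v)^(p+1)/(p+1) - u^(p+1)/(p+1) - u^p*v - (1/2)*(p*u^(p-1))*v^2|
      ≤ p * (M * |v|) * |v| * |v| := final
    _ = p^2*(2^p+2)*u^(p-2)*|v|^3 := by rw [hM]; ring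
lemma key3 (p u v : ℝ) (hp : 1 < p) (hu : 0 < u) (hv : |v| ≤ u/2) :
    u^(p-2)*|v|^3 ≤ |v| ^ (p + 1) + u ^ (p - min 2 p) * |v| ^ (min 2 p + 1) := by
  have h3 : |v| ^ ((3:ℝ)) = |v|^(3:ℕ) := by
    rw [show ((3:ℝ)) = ((3:ℕ):ℝ) by norm_num, Real.rpow_natCast]
  rcases le_or_gt 2 p with h2p | hp2
  · rw [min_eq_left h2p, show (2:ℝ)+1 = (3:ℝ) by norm_num, h3]
    have : (0:ℝ) ≤ |v| ^ (p+1) := Real.rpow_nonneg (abs_nonneg v) _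
    linarith
  · rw [min_eq_right hp2.le]
    have h1 : (0:ℝ) ≤ u ^ (p - p) * |v| ^ (p + 1) := by positivity
    have main : u^(p-2)*|v|^3 ≤ |v| ^ (p+1) := by
      by_cases hv0 : v = 0
      · simp [hv0]
        positivity
      · have hav : 0 < |v| := abs_pos.mpr hv0
        have hsplit : (|v|:ℝ)^(3:ℕ) = |v|^(2-p) * |v|^(p+1) := by
          rw [← h3, ← Real.rpow_add hav, show (2-p)+(p+1) = (3:ℝ) by ring]
        rw [hsplit]
        have hb : |v|^(2-p) ≤ u^(2-p) :=
          Real.rpow_le_rpow (abs_nonneg v) (hv.trans (by linarith)) (by linarith)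
        calc u^(p-2) * (|v|^(2-p) * |v|^(p+1)) ≤ u^(p-2) * (u^(2-p) * |v|^(p+1)) := by
              apply mul_le_mul_of_nonneg_left _ (Real.rpow_nonneg hu.le _)
              exact mul_le_mul_of_nonneg_right hb (Real.rpow_nonneg (abs_nonneg v) _)
          _ = (u^(p-2) * u^(2-p)) * |v|^(p+1) := by ring
          _ = |v|^(p+1) := by
              rw [← Real.rpow_add hu, show p-2+(2-p) = (0:ℝ) by ring, Real.rpow_zero, one_mul]
    linarith

lemma case2 (p u v : ℝ) (hp : 1 < p) (hu : 0 < u) (hv : u/2 < |v|) :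
    |(|u + v| ^ (p + 1) / (p + 1)) - (u ^ (p + 1) / (p + 1))
        - (u ^ (p - 1) * u) * v - (1 / 2) * (p * u ^ (p - 1)) * v ^ 2|
      ≤ (3^(p+1) + 2^(p+1) + 2^p + p*2^(p-1)) * |v| ^ (p+1) := by
  have hav : 0 < |v| := lt_of_le_of_lt (by linarith) hv
  have hu2 : u < 2*|v| := by linarith
  have hp1 : (1:ℝ) ≤ p + 1 := by linarith
  have t1 : |u+v| ^ (p+1) / (p+1) ≤ 3^(p+1) * |v|^(p+1) := by
    have hb : |u+v| ≤ 3*|v| := by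
      calc |u+v| ≤ |u| + |v| := abs_add_le u v
        _ = u + |v| := by rw [abs_of_pos hu]
        _ ≤ 3*|v| := by linarith
    calc |u+v| ^ (p+1) / (p+1) ≤ |u+v| ^ (p+1) :=
          div_le_self (Real.rpow_nonneg (abs_nonneg _) _) hp1
      _ ≤ (3*|v|) ^ (p+1) := Real.rpow_le_rpow (abs_nonneg _) hb (by linarith)
      _ = 3^(p+1) * |v|^(p+1) := Real.mul_rpow (by norm_num) (abs_nonneg v)
  have t2 : u ^ (p+1) / (p+1) ≤ 2^(p+1) * |v|^(p+1) := by
    calc u ^ (p+1) / (p+1) ≤ u ^ (p+1) := div_le_self (Real.rpow_nonneg hu.le _) hp1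
      _ ≤ (2*|v|) ^ (p+1) := Real.rpow_le_rpow hu.le (by linarith) (by linarith)
      _ = 2^(p+1) * |v|^(p+1) := Real.mul_rpow (by norm_num) (abs_nonneg v)
  have hupow : u^(p-1)*u = u^p := by
    rw [← Real.rpow_add_one (ne_of_gt hu) (p-1), show p-1+1 = p by ring]
  have t3 : |(u ^ (p - 1) * u) * v| ≤ 2^p * |v|^(p+1) := by
    rw [abs_mul, abs_of_nonneg (by positivity : (0:ℝ) ≤ u^(p-1)*u), hupow]
    have : u^p ≤ (2*|v|)^p := Real.rpow_le_rpow hu.le (by linarith) (by linarith)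
    calc u^p * |v| ≤ (2*|v|)^p * |v| := mul_le_mul_of_nonneg_right this (abs_nonneg v)
      _ = 2^p * (|v|^p * |v|) := by
          rw [Real.mul_rpow (by norm_num) (abs_nonneg v)]; ring
      _ = 2^p * |v|^(p+1) := by rw [← Real.rpow_add_one hav.ne' p]
  have t4 : |(1/2) * (p * u ^ (p - 1)) * v ^ 2| ≤ p*2^(p-1) * |v|^(p+1) := by
    have hppos : (0:ℝ) < p := by linarith
    rw [abs_mul, abs_mul, abs_mul, abs_of_nonneg (by norm_num : (0:ℝ) ≤ (1:ℝ)/2),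
      abs_of_nonneg hppos.le, abs_of_nonneg (Real.rpow_nonneg hu.le _), abs_pow, sq_abs,
      ← sq_abs v]
    have h1 : u^(p-1) ≤ (2*|v|)^(p-1) := Real.rpow_le_rpow hu.le (by linarith) (by linarith)
    have hvsq : (0:ℝ) ≤ |v|^2 := sq_nonneg _
    have key : u^(p-1) * |v|^2 ≤ 2^(p-1) * |v|^(p+1) := by
      calc u^(p-1) * |v|^2 ≤ (2*|v|)^(p-1) * |v|^2 := mul_le_mul_of_nonneg_right h1 hvsq
        _ = 2^(p-1) * (|v|^(p-1) * |v|^2) := by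
            rw [Real.mul_rpow (by norm_num) (abs_nonneg v)]; ring
        _ = 2^(p-1) * |v|^(p+1) := by
            congr 1
            rw [← Real.rpow_natCast |v| 2, ← Real.rpow_add hav,
              show p-1+((2:ℕ):ℝ) = p+1 by push_cast; ring]
    calc 1/2 * (p * u^(p-1)) * |v|^2 ≤ p * (u^(p-1) * |v|^2) := by
          nlinarith [mul_nonneg (mul_nonneg hppos.le (Real.rpow_nonneg hu.le (p-1))) hvsq]
      _ ≤ p * (2^(p-1) * |v|^(p+1)) := mul_le_mul_of_nonneg_left key hppos.le
      _ = p*2^(p-1) * |v|^(p+1) := by ring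
  calc |(|u + v| ^ (p + 1) / (p + 1)) - (u ^ (p + 1) / (p + 1))
        - (u ^ (p - 1) * u) * v - (1 / 2) * (p * u ^ (p - 1)) * v ^ 2|
      ≤ |(|u + v| ^ (p + 1) / (p + 1)) - (u ^ (p + 1) / (p + 1)) - (u ^ (p - 1) * u) * v|
        + |(1 / 2) * (p * u ^ (p - 1)) * v ^ 2| := abs_sub _ _
    _ ≤ |(|u + v| ^ (p + 1) / (p + 1)) - (u ^ (p + 1) / (p + 1))| + |(u ^ (p - 1) * u) * v|
        + |(1 / 2) * (p * u ^ (p - 1)) * v ^ 2| := by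
          have := abs_sub ( (|u + v| ^ (p + 1) / (p + 1)) - (u ^ (p + 1) / (p + 1)) )
            ( (u ^ (p - 1) * u) * v )
          linarith
    _ ≤ |u + v| ^ (p + 1) / (p + 1) + u ^ (p + 1) / (p + 1) + |(u ^ (p - 1) * u) * v|
        + |(1 / 2) * (p * u ^ (p - 1)) * v ^ 2| := by
          have := abs_sub ((|u + v| ^ (p + 1) / (p + 1))) ((u ^ (p + 1) / (p + 1)))
          rw [abs_of_nonneg (by positivity : (0:ℝ) ≤ |u + v| ^ (p + 1) / (p + 1)),
            abs_of_nonneg (by positivity : (0:ℝ) ≤ u ^ (p + 1) / (p + 1))] at this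
          linarith
    _ ≤ 3^(p+1) * |v|^(p+1) + 2^(p+1) * |v|^(p+1) + 2^p * |v|^(p+1)
        + p*2^(p-1) * |v|^(p+1) := by linarith
    _ = (3^(p+1) + 2^(p+1) + 2^p + p*2^(p-1)) * |v| ^ (p+1) := by ring

theorem taylor_estimate_F (p : ℝ) (hp : 1 < p) :
    ∃ C > 0, ∀ u : ℝ, 0 < u → ∀ v : ℝ,
      |(|u + v| ^ (p + 1) / (p + 1)) - (|u| ^ (p + 1) / (p + 1))
          - (|u| ^ (p - 1) * u) * v - (1 / 2) * (p * |u| ^ (p - 1)) * v ^ 2|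
        ≤ C * (|v| ^ (p + 1) + u ^ (p - min 2 p) * |v| ^ (min 2 p + 1)) := by
  have hp0 : (0:ℝ) < p := by linarith
  refine ⟨p^2*(2^p+2) + (3^(p+1)+2^(p+1)+2^p+p*2^(p-1)), by positivity, ?_⟩
  intro u hu v
  rw [abs_of_pos hu]
  have hRnn : (0:ℝ) ≤ |v| ^ (p+1) + u ^ (p - min 2 p) * |v| ^ (min 2 p + 1) := by positivity
  have hC2 : (0:ℝ) < 3^(p+1)+2^(p+1)+2^p+p*2^(p-1) := by positivity
  have hC1 : (0:ℝ) < p^2*(2^p+2) := by positivity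
  rcases le_or_gt |v| (u/2) with hv | hv
  · have hab := abs_le.mp hv
    have habs : |u+v| = u+v := abs_of_pos (by linarith [hab.1])
    have hupow : u^(p-1)*u = u^p := by
      rw [← Real.rpow_add_one (ne_of_gt hu) (p-1), show p-1+1 = p by ring]
    rw [habs, hupow]
    have h1 := case1 p u v hp hu hv (fun c hc1 hc2 => ratio_bound p c u hp hu hc1 hc2)
    have h2 := key3 p u v hp hu hv
    calc |(u+v)^(p+1)/(p+1) - u^(p+1)/(p+1) - u^p*v - (1/2)*(p*u^(p-1))*v^2|
        ≤ p^2*(2^p+2)*u^(p-2)*|v|^3 := h1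
      _ = p^2*(2^p+2)*(u^(p-2)*|v|^3) := by ring
      _ ≤ p^2*(2^p+2)*(|v| ^ (p + 1) + u ^ (p - min 2 p) * |v| ^ (min 2 p + 1)) :=
          mul_le_mul_of_nonneg_left h2 hC1.le
      _ ≤ (p^2*(2^p+2) + (3^(p+1)+2^(p+1)+2^p+p*2^(p-1)))
            * (|v| ^ (p + 1) + u ^ (p - min 2 p) * |v| ^ (min 2 p + 1)) :=
          mul_le_mul_of_nonneg_right (by linarith) hRnn
  · have h1 := case2 p u v hp hu hv
    have ha : (0:ℝ) ≤ |v|^(p+1) := Real.rpow_nonneg (abs_nonneg v) _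
    have hb : (0:ℝ) ≤ u ^ (p - min 2 p) * |v| ^ (min 2 p + 1) := by positivity
    have h2 : (3^(p+1) + 2^(p+1) + 2^p + p*2^(p-1)) * |v| ^ (p+1)
        ≤ (p^2*(2^p+2) + (3^(p+1)+2^(p+1)+2^p+p*2^(p-1))) * |v| ^ (p+1) :=
      mul_le_mul_of_nonneg_right (by linarith) ha
    have h3 := mul_nonneg (by linarith : (0:ℝ) ≤ p^2*(2^p+2) + (3^(p+1)+2^(p+1)+2^p+p*2^(p-1))) hb
    calc |(|u + v| ^ (p + 1) / (p + 1)) - (u ^ (p + 1) / (p + 1))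
          - (u ^ (p - 1) * u) * v - (1 / 2) * (p * u ^ (p - 1)) * v ^ 2|
        ≤ (3^(p+1) + 2^(p+1) + 2^p + p*2^(p-1)) * |v| ^ (p+1) := h1
      _ ≤ (p^2*(2^p+2) + (3^(p+1)+2^(p+1)+2^p+p*2^(p-1)))
            * (|v| ^ (p + 1) + u ^ (p - min 2 p) * |v| ^ (min 2 p + 1)) := by
          rw [mul_add]; linarith
end

section
/- Let p > 1 and p̄ = min(2,p), f(u) = |u|^{p-1}u. There is a constant C > 0 depending only on p such that for all u > 0 and v ∈ ℝ, |(f(u+v) - f(u) - f'(u)v)v| ≤ C(|v|^{p+1} + u^{p-p̄}|v|^{p̄+1}). -/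
open Real Set

private lemma mvt_rpow (q : ℝ) {a b : ℝ} (ha : 0 < a) (hab : a < b) :
    ∃ c, a < c ∧ c < b ∧ b ^ q - a ^ q = q * c ^ (q - 1) * (b - a) := by
  obtain ⟨c, hc, heq⟩ := exists_hasDerivAt_eq_slope (fun x => x ^ q)
    (fun x => q * x ^ (q - 1)) hab
    (fun x hx => (Real.continuousAt_rpow_const x q
      (Or.inl (ne_of_gt (lt_of_lt_of_le ha hx.1)))).continuousWithinAt)
    (fun x hx => Real.hasDerivAt_rpow_const (Or.inl (ne_of_gt (lt_trans ha hx.1))))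
  refine ⟨c, hc.1, hc.2, ?_⟩
  have hba : b - a ≠ 0 := by linarith
  field_simp at heq
  linarith [heq]

private lemma pow_mid (p u d : ℝ) (hu : 0 < u) (h1 : u/2 ≤ d) (h2 : d ≤ 2*u) :
    d ^ (p-2) ≤ 2 ^ |p-2| * u ^ (p-2) := by
  rcases le_total p 2 with hp2 | hp2
  · have habs : |p-2| = 2-p := by rw [abs_of_nonpos (by linarith)]; ring
    have hd : (u/2) ^ (p-2) ≥ d ^ (p-2) :=
      rpow_le_rpow_of_nonpos (by positivity) h1 (by linarith)
    have : (u/2 : ℝ) ^ (p-2) = 2 ^ (2-p) * u ^ (p-2) := by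
      rw [div_rpow hu.le (by norm_num : (0:ℝ) ≤ 2),
        show (2:ℝ)-p = -(p-2) by ring, Real.rpow_neg (by norm_num : (0:ℝ) ≤ 2)]
      ring
    rw [habs]; linarith [hd, this.symm.le]
  · have habs : |p-2| = p-2 := abs_of_nonneg (by linarith)
    have hd : d ^ (p-2) ≤ (2*u) ^ (p-2) :=
      rpow_le_rpow (by linarith) h2 (by linarith)
    rw [habs, ← Real.mul_rpow (by norm_num) hu.le]
    exact hd

private lemma key_B (p : ℝ) (hp : 1 < p) (u v : ℝ) (hu : 0 < u) (hv : v ≠ 0)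
    (h2 : 2*|v| ≤ u) :
    |(u+v) ^ p - u ^ p - p * u ^ (p-1) * v| ≤ p*(p-1)*2^|p-2| * u^(p-2) * v^2 := by
  have hvu : |v| ≤ u/2 := by linarith
  -- step 1: get c
  have hstep : ∃ c, u/2 ≤ c ∧ c ≤ 2*u ∧ |c - u| ≤ |v| ∧
      (u+v) ^ p - u ^ p = p * c ^ (p-1) * v := by
    rcases hv.lt_or_gt with hneg | hpos
    · have ha : (0:ℝ) < u + v := by
        have : -v ≤ |v| := neg_le_abs v
        linarith
      obtain ⟨c, hc1, hc2, heq⟩ := mvt_rpow p ha (by linarith : u + v < u)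
      refine ⟨c, ?_, by linarith, ?_, by nlinarith [heq]⟩
      · have : -v ≤ |v| := neg_le_abs v
        linarith
      · rw [abs_of_nonpos (by linarith)]
        have : -v ≤ |v| := neg_le_abs v
        linarith
    · obtain ⟨c, hc1, hc2, heq⟩ := mvt_rpow p hu (by linarith : u < u + v)
      refine ⟨c, by linarith, ?_, ?_, by nlinarith [heq]⟩
      · have : v ≤ |v| := le_abs_self v
        linarith
      · rw [abs_of_nonneg (by linarith)]
        have : v ≤ |v| := le_abs_self v
        linarith
  obtain ⟨c, hcl, hcr, hcu, heq⟩ := hstep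
  -- step 2: bound |c^(p-1) - u^(p-1)|
  have hbound : |c ^ (p-1) - u ^ (p-1)| ≤ (p-1) * (2^|p-2| * u^(p-2)) * |v| := by
    rcases lt_trichotomy c u with hcu' | hce | hcu'
    · obtain ⟨d, hd1, hd2, hdeq⟩ := mvt_rpow (p-1) (by linarith : (0:ℝ) < c) hcu'
      have hdm : d ^ (p-1-1) ≤ 2^|p-2| * u^(p-2) := by
        have := pow_mid p u d hu (by linarith) (by linarith)
        simpa [show p-1-1 = p-2 by ring] using this
      have hd0' : (0:ℝ) < d ^ (p-1-1) := Real.rpow_pos_of_pos (by linarith) _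
      have h1 : |c ^ (p-1) - u ^ (p-1)| = (p-1) * d ^ (p-1-1) * (u - c) := by
        rw [abs_sub_comm, hdeq, abs_of_nonneg]
        exact mul_nonneg (mul_nonneg (by linarith) hd0'.le) (by linarith)
      rw [h1]
      have hucv : u - c ≤ |v| := by
        have h := neg_le_abs (c - u)
        have h' := abs_le.mp hcu
        linarith [h'.2, h'.1]
      have hbpos : (0:ℝ) < 2^|p-2| * u^(p-2) :=
        mul_pos (Real.rpow_pos_of_pos two_pos _) (Real.rpow_pos_of_pos hu _)
      have hm := mul_le_mul hdm hucv (by linarith) hbpos.le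
      calc (p-1) * d ^ (p-1-1) * (u-c) = (p-1) * (d ^ (p-1-1) * (u-c)) := by ring
        _ ≤ (p-1) * ((2^|p-2| * u^(p-2)) * |v|) :=
            mul_le_mul_of_nonneg_left hm (by linarith)
        _ = (p-1) * (2^|p-2| * u^(p-2)) * |v| := by ring
    · rw [hce, sub_self, abs_zero]
      exact mul_nonneg (mul_nonneg (by linarith)
        (mul_nonneg (Real.rpow_pos_of_pos two_pos _).le
          (Real.rpow_pos_of_pos hu _).le)) (abs_nonneg v)
    · obtain ⟨d, hd1, hd2, hdeq⟩ := mvt_rpow (p-1) hu hcu'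
      have hdm : d ^ (p-1-1) ≤ 2^|p-2| * u^(p-2) := by
        have := pow_mid p u d hu (by linarith) (by linarith)
        simpa [show p-1-1 = p-2 by ring] using this
      have hd0' : (0:ℝ) < d ^ (p-1-1) := Real.rpow_pos_of_pos (by linarith) _
      have h1 : |c ^ (p-1) - u ^ (p-1)| = (p-1) * d ^ (p-1-1) * (c - u) := by
        rw [hdeq, abs_of_nonneg]
        exact mul_nonneg (mul_nonneg (by linarith) hd0'.le) (by linarith)
      rw [h1]
      have hucv : c - u ≤ |v| := by
        have h' := abs_le.mp hcu
        linarith [h'.2]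
      have hbpos : (0:ℝ) < 2^|p-2| * u^(p-2) :=
        mul_pos (Real.rpow_pos_of_pos two_pos _) (Real.rpow_pos_of_pos hu _)
      have hm := mul_le_mul hdm hucv (by linarith) hbpos.le
      calc (p-1) * d ^ (p-1-1) * (c-u) = (p-1) * (d ^ (p-1-1) * (c-u)) := by ring
        _ ≤ (p-1) * ((2^|p-2| * u^(p-2)) * |v|) :=
            mul_le_mul_of_nonneg_left hm (by linarith)
        _ = (p-1) * (2^|p-2| * u^(p-2)) * |v| := by ring
  have : (u+v) ^ p - u ^ p - p * u ^ (p-1) * v = p * (c ^ (p-1) - u ^ (p-1)) * v := by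
    nlinarith [heq]
  rw [this, abs_mul, abs_mul, abs_of_pos (by linarith : (0:ℝ) < p)]
  have hm2 := mul_le_mul_of_nonneg_right hbound (abs_nonneg v)
  calc p * |c ^ (p-1) - u ^ (p-1)| * |v|
      = p * (|c ^ (p-1) - u ^ (p-1)| * |v|) := by ring
    _ ≤ p * ((p-1) * (2^|p-2| * u^(p-2)) * |v| * |v|) :=
        mul_le_mul_of_nonneg_left hm2 (by linarith)
    _ = p*(p-1)*2^|p-2| * u^(p-2) * v^2 := by rw [← sq_abs v]; ring

theorem taylor_estimate_f_times_v (p : ℝ) (hp : 1 < p) :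
    ∃ C > 0, ∀ u : ℝ, 0 < u → ∀ v : ℝ,
      |((|u + v| ^ (p - 1) * (u + v)) - (|u| ^ (p - 1) * u)
          - (p * |u| ^ (p - 1)) * v) * v|
        ≤ C * (|v| ^ (p + 1) + u ^ (p - min 2 p) * |v| ^ (min 2 p + 1)) := by
  have hp0 : (0:ℝ) < p := by linarith
  set C : ℝ := 3^p + 2^p + p*2^(p-1) + p*(p-1)*2^|p-2| with hC
  have hCpos : 0 < C := by
    have h4 : (0:ℝ) < p*(p-1)*2^|p-2| :=
      mul_pos (mul_pos hp0 (by linarith)) (Real.rpow_pos_of_pos two_pos _)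
    have h1 : (0:ℝ) < 3^p := by positivity
    have h2 : (0:ℝ) < 2^p := by positivity
    have h3 : (0:ℝ) < p*2^(p-1) := by positivity
    rw [hC]; linarith
  refine ⟨C, hCpos, fun u hu v => ?_⟩
  have habsf : ∀ x : ℝ, |(|x| ^ (p-1) * x)| = |x| ^ p := by
    intro x
    rcases eq_or_ne x 0 with rfl | hx
    · simp [Real.zero_rpow (by linarith : p - 1 ≠ 0), Real.zero_rpow (by linarith : p ≠ 0)]
    · rw [abs_mul, abs_of_nonneg (by positivity : (0:ℝ) ≤ |x| ^ (p-1)),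
        ← Real.rpow_add_one (abs_ne_zero.mpr hx)]
      ring_nf
  rcases eq_or_ne v 0 with rfl | hv
  · simp [Real.zero_rpow (by linarith : p + 1 ≠ 0)]
    positivity
  have hv0 : 0 < |v| := abs_pos.mpr hv
  have hRHS2 : (0:ℝ) ≤ u ^ (p - min 2 p) * |v| ^ (min 2 p + 1) := by positivity
  have hRHS1 : (0:ℝ) ≤ |v| ^ (p + 1) := by positivity
  rw [abs_of_pos hu]
  by_cases hcase : 2*|v| ≤ u
  · -- case B
    have huv : (0:ℝ) < u + v := by
      have : -v ≤ |v| := neg_le_abs v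
      linarith
    rw [abs_of_pos huv]
    have e1 : (u+v) ^ (p-1) * (u+v) = (u+v) ^ p := by
      rw [← Real.rpow_add_one huv.ne']; ring_nf
    have e2 : u ^ (p-1) * u = u ^ p := by
      rw [← Real.rpow_add_one hu.ne']; ring_nf
    rw [e1, e2, abs_mul]
    have hkey := key_B p hp u v hu hv hcase
    have hmain : |(u+v) ^ p - u ^ p - p * u ^ (p-1) * v| * |v|
        ≤ p*(p-1)*2^|p-2| * u^(p-2) * (v^2 * |v|) := by
      have h := mul_le_mul_of_nonneg_right hkey (abs_nonneg v)
      calc |(u+v) ^ p - u ^ p - p * u ^ (p-1) * v| * |v|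
          ≤ p*(p-1)*2^|p-2| * u^(p-2) * v^2 * |v| := h
        _ = p*(p-1)*2^|p-2| * u^(p-2) * (v^2 * |v|) := by ring
    have hv3 : v^2 * |v| = |v| ^ (3:ℝ) := by
      rw [← sq_abs, show (3:ℝ) = ((3:ℕ):ℝ) by norm_num, Real.rpow_natCast]
      ring
    have hKC : p*(p-1)*2^|p-2| ≤ C := by
      have h3 : (0:ℝ) < 3^p := by positivity
      have h2' : (0:ℝ) < 2^p := by positivity
      have h2'' : (0:ℝ) < p*2^(p-1) := by positivity
      rw [hC]; linarith
    rcases le_total 2 p with hp2 | hp2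
    · have hmin : min 2 p = 2 := min_eq_left hp2
      rw [hmin]
      have : |(u + v) ^ p - u ^ p - p * u ^ (p - 1) * v| * |v|
          ≤ p*(p-1)*2^|p-2| * (u^(p-2) * |v|^(3:ℝ)) := by
        rw [← hv3]; linarith [hmain]
      have hpos : (0:ℝ) ≤ u^(p-2) * |v|^(3:ℝ) := by positivity
      calc |(u + v) ^ p - u ^ p - p * u ^ (p - 1) * v| * |v|
          ≤ C * (u^(p-2) * |v|^(3:ℝ)) :=
            this.trans (mul_le_mul_of_nonneg_right hKC hpos)
        _ ≤ C * (|v| ^ (p+1) + u ^ (p-2) * |v| ^ (2+1:ℝ)) := by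
            rw [show (2+1:ℝ) = 3 by norm_num]
            exact mul_le_mul_of_nonneg_left (le_add_of_nonneg_left hRHS1) hCpos.le
    · have hmin : min 2 p = p := min_eq_right hp2
      rw [hmin]
      -- u^(p-2) ≤ |v|^(p-2) * 1 ... : u ≥ 2|v|, p-2 ≤ 0
      have hu2 : u ^ (p-2) ≤ (2*|v|) ^ (p-2) :=
        rpow_le_rpow_of_nonpos (by positivity) hcase (by linarith)
      have h2v : (2*|v|) ^ (p-2) = 2^(p-2) * |v|^(p-2) :=
        Real.mul_rpow (by norm_num) hv0.le
      have h2le1 : (2:ℝ)^(p-2) ≤ 1 :=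
        Real.rpow_le_one_of_one_le_of_nonpos (by norm_num) (by linarith)
      have hup : u ^ (p-2) ≤ |v|^(p-2) := by
        have hvp : (0:ℝ) < |v|^(p-2) := by positivity
        nlinarith [hu2, h2v, h2le1, hvp]
      have hcomb : |v|^(p-2) * (v^2 * |v|) = |v|^(p+1) := by
        rw [hv3, ← Real.rpow_add hv0]
        congr 1
        ring
      have hvv : (0:ℝ) ≤ v^2 * |v| := by positivity
      have hK : (0:ℝ) < p*(p-1)*2^|p-2| :=
        mul_pos (mul_pos hp0 (by linarith)) (Real.rpow_pos_of_pos two_pos _)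
      have hfin : |(u + v) ^ p - u ^ p - p * u ^ (p - 1) * v| * |v|
          ≤ p*(p-1)*2^|p-2| * |v|^(p+1) := by
        calc |(u + v) ^ p - u ^ p - p * u ^ (p - 1) * v| * |v|
            ≤ p*(p-1)*2^|p-2| * u^(p-2) * (v^2 * |v|) := hmain
          _ = p*(p-1)*2^|p-2| * (u^(p-2) * (v^2 * |v|)) := by ring
          _ ≤ p*(p-1)*2^|p-2| * (|v|^(p-2) * (v^2 * |v|)) :=
              mul_le_mul_of_nonneg_left (mul_le_mul_of_nonneg_right hup hvv) hK.le
          _ = p*(p-1)*2^|p-2| * |v|^(p+1) := by rw [hcomb]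
      calc |(u + v) ^ p - u ^ p - p * u ^ (p - 1) * v| * |v|
          ≤ C * |v|^(p+1) := hfin.trans (mul_le_mul_of_nonneg_right hKC hRHS1)
        _ ≤ C * (|v| ^ (p+1) + u ^ (p-p) * |v| ^ (p+1)) := by
            have hnn : (0:ℝ) ≤ u ^ (p-p) * |v| ^ (p+1) := by positivity
            exact mul_le_mul_of_nonneg_left (le_add_of_nonneg_right hnn) hCpos.le
  · -- case A : u < 2|v|
    push_neg at hcase
    rw [abs_mul]
    have e2 : u ^ (p-1) * u = u ^ p := by
      rw [← Real.rpow_add_one hu.ne']; ring_nf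
    have htri : |(|u + v| ^ (p - 1) * (u + v)) - u ^ (p - 1) * u - (p * u ^ (p - 1)) * v|
        ≤ |u+v|^p + u^p + p * u^(p-1) * |v| := by
      have h1 := habsf (u+v)
      calc |(|u + v| ^ (p - 1) * (u + v)) - u ^ (p - 1) * u - (p * u ^ (p - 1)) * v|
          ≤ |(|u + v| ^ (p - 1) * (u + v)) - u ^ (p - 1) * u| + |(p * u ^ (p - 1)) * v| :=
            abs_sub _ _
        _ ≤ |(|u + v| ^ (p - 1) * (u + v))| + |u ^ (p - 1) * u| + |(p * u ^ (p - 1)) * v| := by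
            linarith [abs_sub (|u + v| ^ (p - 1) * (u + v)) (u ^ (p - 1) * u)]
        _ ≤ |u+v|^p + u^p + p * u^(p-1) * |v| := by
            rw [h1, e2, abs_of_pos (by positivity : (0:ℝ) < u ^ p), abs_mul,
              abs_of_pos (by positivity : (0:ℝ) < p * u ^ (p-1))]
    -- bounds
    have hb1 : |u+v| ^ p ≤ 3^p * |v|^p := by
      have : |u+v| ≤ 3*|v| := by
        calc |u+v| ≤ |u| + |v| := abs_add_le u v
          _ = u + |v| := by rw [abs_of_pos hu]
          _ ≤ 3*|v| := by linarith
      calc |u+v| ^ p ≤ (3*|v|)^p := rpow_le_rpow (abs_nonneg _) this (by linarith)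
        _ = 3^p * |v|^p := Real.mul_rpow (by norm_num) hv0.le
    have hb2 : u ^ p ≤ 2^p * |v|^p := by
      calc u ^ p ≤ (2*|v|)^p := rpow_le_rpow hu.le hcase.le (by linarith)
        _ = 2^p * |v|^p := Real.mul_rpow (by norm_num) hv0.le
    have hb3 : u ^ (p-1) ≤ 2^(p-1) * |v|^(p-1) := by
      calc u ^ (p-1) ≤ (2*|v|)^(p-1) := rpow_le_rpow hu.le hcase.le (by linarith)
        _ = 2^(p-1) * |v|^(p-1) := Real.mul_rpow (by norm_num) hv0.le
    have hvp1 : |v|^p * |v| = |v|^(p+1) := by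
      rw [← Real.rpow_add_one hv0.ne']
    have hvp1' : |v|^(p-1) * |v| * |v| = |v|^(p+1) := by
      rw [← Real.rpow_add_one hv0.ne', ← Real.rpow_add_one hv0.ne']
      norm_num
    have hA : |(|u + v| ^ (p - 1) * (u + v)) - u ^ (p - 1) * u - (p * u ^ (p - 1)) * v| * |v|
        ≤ (3^p + 2^p + p*2^(p-1)) * |v|^(p+1) := by
      have hb3' := mul_le_mul_of_nonneg_right
        (mul_le_mul_of_nonneg_left hb3 hp0.le) (abs_nonneg v)
      have hsum : |u+v|^p + u^p + p * u^(p-1) * |v|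
          ≤ (3^p + 2^p) * |v|^p + p * 2^(p-1) * |v|^(p-1) * |v| := by
        nlinarith [hb1, hb2, hb3']
      have := mul_le_mul_of_nonneg_right (htri.trans hsum) hv0.le
      calc |(|u + v| ^ (p - 1) * (u + v)) - u ^ (p - 1) * u - (p * u ^ (p - 1)) * v| * |v|
          ≤ ((3^p + 2^p) * |v|^p + p * 2^(p-1) * |v|^(p-1) * |v|) * |v| := this
        _ = (3^p + 2^p) * (|v|^p * |v|) + p*2^(p-1) * (|v|^(p-1) * |v| * |v|) := by
            ring
        _ = (3^p + 2^p + p*2^(p-1)) * |v|^(p+1) := by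
            rw [hvp1, hvp1']; ring
    have hKC : (3:ℝ)^p + 2^p + p*2^(p-1) ≤ C := by
      have : (0:ℝ) < p*(p-1)*2^|p-2| :=
        mul_pos (mul_pos hp0 (by linarith)) (Real.rpow_pos_of_pos two_pos _)
      rw [hC]; linarith
    rw [e2] at *
    calc |(|u + v| ^ (p - 1) * (u + v)) - u ^ p - (p * u ^ (p - 1)) * v| * |v|
        ≤ C * |v|^(p+1) := by nlinarith [hA, hKC, hRHS1, e2]
      _ ≤ C * (|v| ^ (p+1) + u ^ (p - min 2 p) * |v| ^ (min 2 p + 1)) := by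
          nlinarith [hCpos, hRHS2]
end

section
/- Let p > 1 and p̄ = min(2,p), f(u) = |u|^{p-1}u. There is a constant C > 0 depending only on p such that for all u > 0 and v ∈ ℝ, |f(u+v) - f(u) - f'(u)v - ½f''(u)v²| ≤ C(u^{-1}|v|^{p+1} + u^{p-p̄-1}|v|^{p̄+1}). -/
open Real Set

lemma aux_exp_bound (c x : ℝ) (hx1 : (1:ℝ)/2 ≤ x) (hx2 : x ≤ 2) : x ^ c ≤ Real.exp |c| := by
  have hx0 : 0 < x := by linarith
  rw [Real.rpow_def_of_pos hx0]
  apply Real.exp_le_exp.2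
  have hlog : |Real.log x| ≤ 1 := by
    have h1 : Real.log x ≤ Real.log 2 := Real.log_le_log hx0 hx2
    have h2 : Real.log (1/2) ≤ Real.log x := Real.log_le_log (by norm_num) hx1
    have h3 : Real.log (1/2) = -Real.log 2 := by rw [one_div, Real.log_inv]
    have h4 : Real.log 2 ≤ 1 := by
      have := Real.log_two_lt_d9; linarith
    rw [abs_le]
    constructor <;> [linarith [h3 ▸ h2]; linarith]
  calc Real.log x * c ≤ |Real.log x * c| := le_abs_self _
    _ = |Real.log x| * |c| := abs_mul _ _
    _ ≤ 1 * |c| := mul_le_mul_of_nonneg_right hlog (abs_nonneg c)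
    _ = |c| := one_mul _

lemma pow_mono_half (t a b : ℝ) (ht : 1/2 ≤ |t|) (hab : a ≤ b) :
    |t| ^ a ≤ 2 ^ (b - a) * |t| ^ b := by
  have ht0 : (0:ℝ) < |t| := by linarith
  have h1 : ((1:ℝ)/2) ^ (b - a) ≤ |t| ^ (b - a) :=
    Real.rpow_le_rpow (by norm_num) ht (by linarith)
  have h2 : |t| ^ a * ((1:ℝ)/2) ^ (b - a) ≤ |t| ^ a * |t| ^ (b - a) :=
    mul_le_mul_of_nonneg_left h1 (Real.rpow_nonneg (abs_nonneg t) a)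
  rw [← Real.rpow_add ht0] at h2
  have h3 : a + (b - a) = b := by ring
  rw [h3] at h2
  have h4 : ((1:ℝ)/2 : ℝ) ^ (b - a) * (2:ℝ) ^ (b - a) = 1 := by
    rw [← Real.mul_rpow (by norm_num) (by norm_num)]
    norm_num
  have h5 : (0:ℝ) < (2:ℝ) ^ (b - a) := Real.rpow_pos_of_pos (by norm_num) _
  calc |t| ^ a = |t| ^ a * ((1:ℝ)/2) ^ (b - a) * (2:ℝ) ^ (b - a) := by
        rw [mul_assoc, h4, mul_one]
    _ ≤ |t| ^ b * (2:ℝ) ^ (b - a) := mul_le_mul_of_nonneg_right h2 h5.le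
    _ = 2 ^ (b - a) * |t| ^ b := mul_comm _ _

lemma deriv_onep (c : ℝ) (s : ℝ) (hs : (1:ℝ) + s ≠ 0) :
    HasDerivAt (fun x : ℝ => (1+x) ^ c) (c * (1+s) ^ (c-1)) s := by
  have h1 : HasDerivAt (fun x : ℝ => 1 + x) 1 s := by
    simpa using (hasDerivAt_id s).const_add (1:ℝ)
  have h2 := (Real.hasDerivAt_rpow_const (x := 1 + s) (p := c) (Or.inl hs)).comp s h1
  simp [mul_comm] at h2
  exact h2

lemma mem_facts {t x : ℝ} (ht : |t| ≤ 1/2) (hx : x ∈ uIcc 0 t) :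
    |x| ≤ |t| ∧ (1:ℝ)/2 ≤ 1 + x ∧ 1 + x ≤ 2 := by
  rw [Set.mem_uIcc] at hx
  rw [abs_le] at ht
  rcases hx with ⟨h1, h2⟩ | ⟨h1, h2⟩ <;>
    constructor <;> [skip; constructor; skip; constructor] <;>
    first
      | (rw [abs_le]; constructor <;> rcases abs_cases t with ⟨he, _⟩ | ⟨he, _⟩ <;> linarith)
      | linarith

lemma small_case (p : ℝ) (hp : 1 < p) (t : ℝ) (ht : |t| ≤ 1/2) :
    |(1+t)^p - 1 - p*t - (p*(p-1)/2)*t^2|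
      ≤ (p*(p-1)*|p-2| * Real.exp |p-3|) * (|t| * |t| * |t|) := by
  set E := Real.exp |p-3| with hEdef
  have hE : 0 < E := Real.exp_pos _
  set K1 : ℝ := |p-2| * E with hK1def
  have hK1 : 0 ≤ K1 := mul_nonneg (abs_nonneg _) hE.le
  -- Step 1
  have h1 : ∀ x ∈ uIcc 0 t, |(1+x)^(p-2) - 1| ≤ K1 * |x| := by
    intro x hx
    have hsub : uIcc 0 x ⊆ uIcc 0 t := uIcc_subset_uIcc left_mem_uIcc hx
    have key := Convex.norm_image_sub_le_of_norm_hasDerivWithin_le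
      (f := fun s : ℝ => (1+s)^(p-2)) (f' := fun s : ℝ => (p-2)*(1+s)^(p-3))
      (s := uIcc 0 x) (C := K1) (x := 0) (y := x)
      (fun y hy => by
        obtain ⟨_, hy2, _⟩ := mem_facts ht (hsub hy)
        have := (deriv_onep (p-2) y (by linarith)).hasDerivWithinAt (s := uIcc 0 x)
        simpa [show p-2-1 = p-3 by ring] using this)
      (fun y hy => by
        obtain ⟨_, hy2, hy3⟩ := mem_facts ht (hsub hy)
        have hb := aux_exp_bound (p-3) (1+y) hy2 hy3
        have hpos : (0:ℝ) ≤ (1+y)^(p-3) := Real.rpow_nonneg (by linarith) _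
        calc ‖(p-2)*(1+y)^(p-3)‖ = |p-2| * |(1+y)^(p-3)| := abs_mul _ _
          _ ≤ |p-2| * E := by
              rw [abs_of_nonneg hpos]; exact mul_le_mul_of_nonneg_left hb (abs_nonneg _))
      (convex_uIcc 0 x) left_mem_uIcc right_mem_uIcc
    simpa [Real.one_rpow] using key
  -- Step 2
  have h2 : ∀ x ∈ uIcc 0 t, |p*(1+x)^(p-1) - (p + p*(p-1)*x)| ≤ (p*(p-1)*K1) * (|t| * |x|) := by
    intro x hx
    have hsub : uIcc 0 x ⊆ uIcc 0 t := uIcc_subset_uIcc left_mem_uIcc hx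
    have key := Convex.norm_image_sub_le_of_norm_hasDerivWithin_le
      (f := fun s : ℝ => p*(1+s)^(p-1) - (p + p*(p-1)*s))
      (f' := fun s : ℝ => p*(p-1)*(1+s)^(p-2) - p*(p-1))
      (s := uIcc 0 x) (C := p*(p-1)*K1*|t|) (x := 0) (y := x)
      (fun y hy => by
        obtain ⟨_, hy2, _⟩ := mem_facts ht (hsub hy)
        have ha := ((deriv_onep (p-1) y (by linarith)).const_mul p)
        have hb : HasDerivAt (fun s : ℝ => p + p*(p-1)*s) (p*(p-1)) y := by
          simpa using ((hasDerivAt_id y).const_mul (p*(p-1))).const_add p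
        have := ha.sub hb
        have heq : p * ((p-1) * (1+y)^(p-1-1)) = p*(p-1)*(1+y)^(p-2) := by
          ring_nf
        rw [heq] at this
        exact this.hasDerivWithinAt)
      (fun y hy => by
        obtain ⟨hy1, _, _⟩ := mem_facts ht (hsub hy)
        have hx1 := (mem_facts ht (hsub hy)).1
        have h1y := h1 y (hsub hy)
        have hpp : (0:ℝ) ≤ p*(p-1) := by nlinarith
        have heq : p*(p-1)*(1+y)^(p-2) - p*(p-1) = p*(p-1) * ((1+y)^(p-2) - 1) := by ring
        calc ‖p*(p-1)*(1+y)^(p-2) - p*(p-1)‖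
            = (p*(p-1)) * |(1+y)^(p-2) - 1| := by
              rw [Real.norm_eq_abs, heq, abs_mul, abs_of_nonneg hpp]
          _ ≤ (p*(p-1)) * (K1 * |y|) :=
              mul_le_mul_of_nonneg_left h1y hpp
          _ ≤ p*(p-1)*K1*|t| := by
              rw [← mul_assoc]
              exact mul_le_mul_of_nonneg_left hy1 (mul_nonneg hpp hK1)
        )
      (convex_uIcc 0 x) left_mem_uIcc right_mem_uIcc
    have h0 : p*(1+(0:ℝ))^(p-1) - (p + p*(p-1)*0) = 0 := by
      simp [Real.one_rpow]
    simpa [h0, mul_assoc, abs_mul] using key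
  -- Step 3
  have key := Convex.norm_image_sub_le_of_norm_hasDerivWithin_le
    (f := fun s : ℝ => (1+s)^p - (1 + p*s + (p*(p-1)/2)*s^2))
    (f' := fun s : ℝ => p*(1+s)^(p-1) - (p + p*(p-1)*s))
    (s := uIcc 0 t) (C := p*(p-1)*K1*(|t| * |t|)) (x := 0) (y := t)
    (fun y hy => by
      obtain ⟨_, hy2, _⟩ := mem_facts ht hy
      have ha := deriv_onep p y (by linarith)
      have hb : HasDerivAt (fun s : ℝ => 1 + p*s + (p*(p-1)/2)*s^2) (p + p*(p-1)*y) y := by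
        have h2' := (hasDerivAt_pow 2 y).const_mul (p*(p-1)/2)
        have hl := ((hasDerivAt_id y).const_mul p).const_add (1:ℝ)
        have := hl.add h2'
        refine this.congr_deriv ?_
        push_cast; ring
      exact (ha.sub hb).hasDerivWithinAt)
    (fun y hy => by
      obtain ⟨hy1, _, _⟩ := mem_facts ht hy
      have h2y := h2 y hy
      calc ‖p*(1+y)^(p-1) - (p + p*(p-1)*y)‖ ≤ (p*(p-1)*K1) * (|t| * |y|) := h2y
        _ ≤ p*(p-1)*K1*(|t| * |t|) := by
            apply mul_le_mul_of_nonneg_left _ (mul_nonneg (by nlinarith : (0:ℝ) ≤ p*(p-1)) hK1)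
            exact mul_le_mul_of_nonneg_left hy1 (abs_nonneg t))
    (convex_uIcc 0 t) left_mem_uIcc right_mem_uIcc
  have h0 : (1+(0:ℝ))^p - (1 + p*0 + (p*(p-1)/2)*0^2) = 0 := by
    simp [Real.one_rpow]
  have key2 : |(1+t)^p - (1 + p*t + (p*(p-1)/2)*t^2)| ≤ p*(p-1)*K1*(|t| * |t|) * |t| := by
    simpa [h0] using key
  have heq2 : (1+t)^p - 1 - p*t - (p*(p-1)/2)*t^2
      = (1+t)^p - (1 + p*t + (p*(p-1)/2)*t^2) := by ring
  rw [heq2]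
  calc |(1+t)^p - (1 + p*t + (p*(p-1)/2)*t^2)| ≤ p*(p-1)*K1*(|t| * |t|) * |t| := key2
    _ = p*(p-1)*(|p-2| * E) * (|t| * |t| * |t|) := by rw [hK1def]; ring
    _ = (p*(p-1)*|p-2| * Real.exp |p-3|) * (|t| * |t| * |t|) := by rw [hEdef]; ring

lemma core_lemma (p : ℝ) (hp : 1 < p) : ∃ C > 0, ∀ t : ℝ,
    |(|1+t| ^ (p-1) * (1+t)) - 1 - p*t - (p*(p-1)/2)*t^2|
      ≤ C * (|t|^(p+1) + |t|^(min 2 p + 1)) := by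
  obtain ⟨K, hKdef, hK⟩ : ∃ K : ℝ, K = p*(p-1)*|p-2| * Real.exp |p-3| + 1 ∧ 0 < K := by
    refine ⟨_, rfl, ?_⟩
    have hpp : (0:ℝ) ≤ p*(p-1) := by nlinarith
    have h1 := mul_nonneg (mul_nonneg hpp (abs_nonneg (p-2))) (Real.exp_pos |p-3|).le
    linarith
  obtain ⟨C1, hC1def, hC1⟩ :
      ∃ C1 : ℝ, C1 = (3:ℝ)^p * 2 + 2^(p+1) + p * 2^p + (p*(p-1)/2) * 2^(p-1) ∧ 0 < C1 := by
    refine ⟨_, rfl, ?_⟩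
    have a1 : (0:ℝ) < (3:ℝ)^p := Real.rpow_pos_of_pos (by norm_num) _
    have a2 : (0:ℝ) < (2:ℝ)^(p+1) := Real.rpow_pos_of_pos (by norm_num) _
    have a3 : (0:ℝ) < (2:ℝ)^p := Real.rpow_pos_of_pos (by norm_num) _
    have a4 : (0:ℝ) < (2:ℝ)^(p-1) := Real.rpow_pos_of_pos (by norm_num) _
    have a5 : (0:ℝ) < p * 2^p := mul_pos (by linarith) a3
    have a6 : (0:ℝ) ≤ (p*(p-1)/2) * 2^(p-1) := mul_nonneg (by nlinarith) a4.le
    linarith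
  refine ⟨K + C1, by linarith, fun t => ?_⟩
  have hmin1 : min 2 p + 1 ≤ 3 := by
    have : min 2 p ≤ 2 := min_le_left _ _
    linarith
  have hmin0 : 0 < min 2 p + 1 := by
    have : (1:ℝ) ≤ min 2 p := le_min (by norm_num) hp.le
    linarith
  have hRHS0 : 0 ≤ |t|^(p+1) := Real.rpow_nonneg (abs_nonneg t) _
  have hRHS1 : 0 ≤ |t|^(min 2 p + 1) := Real.rpow_nonneg (abs_nonneg t) _
  rcases eq_or_ne t 0 with rfl | ht0
  · have z1 : ((0:ℝ)) ^ (p+1) = 0 := Real.zero_rpow (by linarith)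
    have z2 : ((0:ℝ)) ^ (min 2 p + 1) = 0 := Real.zero_rpow (ne_of_gt hmin0)
    simp [Real.one_rpow, z1, z2]
  rcases le_or_gt |t| (1/2) with hts | htl
  · -- small case
    have h1t : (0:ℝ) < 1 + t := by
      rcases abs_le.1 hts with ⟨h1, h2⟩; linarith
    have habs : |1 + t| = 1 + t := abs_of_pos h1t
    have hF : |1+t| ^ (p-1) * (1+t) = (1+t)^p := by
      rw [habs, ← Real.rpow_add_one (ne_of_gt h1t)]
      norm_num
    rw [hF]
    have hsm := small_case p hp t hts
    have h3 : |t| * |t| * |t| = |t| ^ (3:ℝ) := by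
      rw [show (3:ℝ) = ((3:ℕ):ℝ) by norm_num, Real.rpow_natCast]; ring
    have h4 : |t| ^ (3:ℝ) ≤ |t| ^ (min 2 p + 1) := by
      apply Real.rpow_le_rpow_of_exponent_ge (abs_pos.2 ht0) (by linarith) hmin1
    have h5 : p*(p-1)*|p-2| * Real.exp |p-3| ≤ K := by rw [hKdef]; linarith
    have h6 : 0 ≤ p*(p-1)*|p-2| * Real.exp |p-3| := by
      have hpp : (0:ℝ) ≤ p*(p-1) := by nlinarith
      exact mul_nonneg (mul_nonneg hpp (abs_nonneg _)) (Real.exp_pos _).le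
    calc |(1+t)^p - 1 - p*t - (p*(p-1)/2)*t^2|
        ≤ (p*(p-1)*|p-2| * Real.exp |p-3|) * (|t| * |t| * |t|) := hsm
      _ = (p*(p-1)*|p-2| * Real.exp |p-3|) * |t| ^ (3:ℝ) := by rw [h3]
      _ ≤ K * |t| ^ (min 2 p + 1) := by
          apply mul_le_mul h5 h4 (Real.rpow_nonneg (abs_nonneg t) _) hK.le
      _ ≤ (K + C1) * (|t|^(p+1) + |t|^(min 2 p + 1)) := by
          have expand : (K + C1) * (|t|^(p+1) + |t|^(min 2 p + 1))
              = K * |t|^(min 2 p + 1) + (K * |t|^(p+1) + C1 * |t|^(p+1)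
                + C1 * |t|^(min 2 p + 1)) := by ring
          rw [expand]
          linarith [mul_nonneg hC1.le hRHS1, mul_nonneg hK.le hRHS0, mul_nonneg hC1.le hRHS0]
  · -- large case
    have htl' : 1/2 ≤ |t| := htl.le
    have hpm := pow_mono_half t
    have e1 : |1+t| ^ (p-1) * |1+t| = |1+t| ^ p := by
      rcases eq_or_ne (1+t) 0 with h | h
      · rw [h]
        simp [Real.zero_rpow (show p - 1 ≠ 0 by intro hc; linarith)
          , Real.zero_rpow (show p ≠ 0 by intro hc; linarith)]
      · rw [← Real.rpow_add_one (abs_ne_zero.2 h)]; norm_num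
    have e2 : |1+t| ≤ 3 * |t| := by
      calc |1+t| ≤ 1 + |t| := by simpa using abs_add_le 1 t
        _ ≤ 3 * |t| := by linarith
    have e3 : |1+t| ^ p ≤ (3:ℝ)^p * |t|^p := by
      rw [← Real.mul_rpow (by norm_num) (abs_nonneg t)]
      exact Real.rpow_le_rpow (abs_nonneg _) e2 (by linarith)
    have e4 : |t|^p ≤ 2 * |t|^(p+1) := by
      have := hpm p (p+1) htl' (by linarith)
      calc |t|^p ≤ 2^((p+1)-p) * |t|^(p+1) := this
        _ = 2 * |t|^(p+1) := by norm_num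
    have e5 : (1:ℝ) ≤ 2^(p+1) * |t|^(p+1) := by
      have := hpm 0 (p+1) htl' (by linarith)
      simpa [Real.rpow_zero] using this
    have e6 : |t| ≤ 2^p * |t|^(p+1) := by
      have := hpm 1 (p+1) htl' (by linarith)
      have h : (p+1) - 1 = p := by ring
      rw [Real.rpow_one, h] at this
      exact this
    have e7 : t^2 ≤ 2^(p-1) * |t|^(p+1) := by
      have := hpm 2 (p+1) htl' (by linarith)
      have h : (p+1) - 2 = p - 1 := by ring
      have h2 : |t| ^ (2:ℝ) = t^2 := by
        rw [show (2:ℝ) = ((2:ℕ):ℝ) by norm_num, Real.rpow_natCast, sq_abs]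
      rw [h, h2] at this
      exact this
    have habs_bound : |(|1+t| ^ (p-1) * (1+t)) - 1 - p*t - (p*(p-1)/2)*t^2|
        ≤ |1+t| ^ p + 1 + p*|t| + (p*(p-1)/2)*t^2 := by
      have t1 : |(|1+t|) ^ (p-1) * (1+t)| = (|1+t|) ^ p := by
        rw [abs_mul, abs_of_nonneg (Real.rpow_nonneg (abs_nonneg _) _)]
        exact e1
      have t2 : |p*t| = p*|t| := by rw [abs_mul, abs_of_pos (by linarith : (0:ℝ) < p)]
      have t3 : |(p*(p-1)/2)*t^2| = (p*(p-1)/2)*t^2 := by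
        rw [abs_mul, abs_of_nonneg (by nlinarith : (0:ℝ) ≤ p*(p-1)/2), abs_of_nonneg (sq_nonneg t)]
      calc |(|1+t| ^ (p-1) * (1+t)) - 1 - p*t - (p*(p-1)/2)*t^2|
          ≤ |(|1+t|) ^ (p-1) * (1+t)| + |(1:ℝ)| + |p*t| + |(p*(p-1)/2)*t^2| := by
            have := abs_sub (|1+t| ^ (p-1) * (1+t) - 1 - p*t) ((p*(p-1)/2)*t^2)
            have h2 := abs_sub (|1+t| ^ (p-1) * (1+t) - 1) (p*t)
            have h3 := abs_sub (|1+t| ^ (p-1) * (1+t)) (1:ℝ)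
            exact this.trans (add_le_add (h2.trans (add_le_add h3 le_rfl)) le_rfl)
          _ = |1+t| ^ p + 1 + p*|t| + (p*(p-1)/2)*t^2 := by
            rw [t1, t2, t3, abs_one]
    have hnn : (0:ℝ) ≤ |t|^(p+1) := hRHS0
    calc |(|1+t| ^ (p-1) * (1+t)) - 1 - p*t - (p*(p-1)/2)*t^2|
        ≤ |1+t| ^ p + 1 + p*|t| + (p*(p-1)/2)*t^2 := habs_bound
      _ ≤ (3:ℝ)^p * (2 * |t|^(p+1)) + 2^(p+1) * |t|^(p+1) + p * (2^p * |t|^(p+1))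
            + (p*(p-1)/2) * (2^(p-1) * |t|^(p+1)) := by
          have b1 : |1+t| ^ p ≤ (3:ℝ)^p * (2 * |t|^(p+1)) := by
            calc |1+t| ^ p ≤ (3:ℝ)^p * |t|^p := e3
              _ ≤ (3:ℝ)^p * (2 * |t|^(p+1)) :=
                mul_le_mul_of_nonneg_left e4 (Real.rpow_pos_of_pos (by norm_num) p).le
          have b3 : p*|t| ≤ p * (2^p * |t|^(p+1)) :=
            mul_le_mul_of_nonneg_left e6 (by linarith)
          have b4 : (p*(p-1)/2)*t^2 ≤ (p*(p-1)/2) * (2^(p-1) * |t|^(p+1)) :=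
            mul_le_mul_of_nonneg_left e7 (by nlinarith)
          linarith
      _ = C1 * |t|^(p+1) := by rw [hC1def]; ring
      _ ≤ (K + C1) * (|t|^(p+1) + |t|^(min 2 p + 1)) := by
          have expand : (K + C1) * (|t|^(p+1) + |t|^(min 2 p + 1))
              = C1 * |t|^(p+1) + (K * |t|^(p+1) + K * |t|^(min 2 p + 1)
                + C1 * |t|^(min 2 p + 1)) := by ring
          rw [expand]
          linarith [mul_nonneg hK.le hRHS0, mul_nonneg hK.le hRHS1, mul_nonneg hC1.le hRHS1]

theorem taylor_estimate_f_second_order (p : ℝ) (hp : 1 < p) :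
    ∃ C > 0, ∀ u : ℝ, 0 < u → ∀ v : ℝ,
      |(|u + v| ^ (p - 1) * (u + v)) - (|u| ^ (p - 1) * u)
          - (p * |u| ^ (p - 1)) * v - (1 / 2) * (p * (p - 1) * |u| ^ (p - 3) * u) * v ^ 2|
        ≤ C * (u ^ (-1 : ℝ) * |v| ^ (p + 1) + u ^ (p - min 2 p - 1) * |v| ^ (min 2 p + 1)) := by

  obtain ⟨C, hC, hcore⟩ := core_lemma p hp
  refine ⟨C, hC, fun u hu v => ?_⟩
  have hu0 : u ≠ 0 := ne_of_gt hu
  set t : ℝ := v / u with htdef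
  have hv : v = u * t := by rw [htdef]; field_simp
  have huv : u + v = u * (1 + t) := by rw [hv]; ring
  have habsu : |u| = u := abs_of_pos hu
  have hcomb : u ^ (p-1) * u = u ^ p := by
    rw [← Real.rpow_add_one hu0]; norm_num
  have hcomb3 : u ^ (p-3) * u ^ (3:ℕ) = u ^ p := by
    rw [← Real.rpow_natCast u 3, ← Real.rpow_add hu]; norm_num
  have e1 : |u + v| ^ (p-1) * (u+v) = u^p * (|1+t|^(p-1) * (1+t)) := by
    rw [huv, abs_mul, habsu, Real.mul_rpow hu.le (abs_nonneg _)]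
    rw [show u ^ (p-1) * |1+t|^(p-1) * (u * (1+t))
        = (u^(p-1) * u) * (|1+t|^(p-1) * (1+t)) by ring, hcomb]
  have e2 : |u| ^ (p-1) * u = u ^ p := by rw [habsu, hcomb]
  have e3 : (p * |u|^(p-1)) * v = u^p * (p * t) := by
    rw [habsu, hv, show p * u^(p-1) * (u*t) = (u^(p-1) * u) * (p * t) by ring, hcomb]
  have e4 : (1/2) * (p*(p-1)*|u|^(p-3)*u) * v^2 = u^p * ((p*(p-1)/2)*t^2) := by
    rw [habsu, hv, show (1/2) * (p*(p-1)*u^(p-3)*u) * (u*t)^2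
        = (u^(p-3) * u^(3:ℕ)) * ((p*(p-1)/2)*t^2) by ring, hcomb3]
  have hupnn : (0:ℝ) ≤ u ^ p := (Real.rpow_pos_of_pos hu p).le
  have hL : (|u + v| ^ (p - 1) * (u + v)) - (|u| ^ (p - 1) * u)
        - (p * |u| ^ (p - 1)) * v - (1 / 2) * (p * (p - 1) * |u| ^ (p - 3) * u) * v ^ 2
      = u ^ p * ((|1+t| ^ (p-1) * (1+t)) - 1 - p*t - (p*(p-1)/2)*t^2) := by
    rw [e1, e2, e3, e4]; ring
  have hvabs : |v| = u * |t| := by rw [hv, abs_mul, habsu]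
  have c1 : u ^ (-1:ℝ) * u ^ (p+1) = u ^ p := by
    rw [← Real.rpow_add hu]; norm_num
  have c2 : u ^ (p - min 2 p - 1) * u ^ (min 2 p + 1) = u ^ p := by
    rw [← Real.rpow_add hu]
    congr 1; ring
  have hReq : u ^ (-1:ℝ) * |v|^(p+1) + u^(p - min 2 p - 1) * |v|^(min 2 p + 1)
      = u ^ p * (|t|^(p+1) + |t|^(min 2 p + 1)) := by
    rw [hvabs, Real.mul_rpow hu.le (abs_nonneg t), Real.mul_rpow hu.le (abs_nonneg t),
      ← mul_assoc, ← mul_assoc, c1, c2, mul_add]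
  rw [hL, hReq, abs_mul, abs_of_nonneg hupnn]
  have h := mul_le_mul_of_nonneg_left (hcore t) hupnn
  exact h.trans (le_of_eq (mul_left_comm _ _ _))
end

section
/- Let p > 1, κ = (2(p+1)/(p-1)²)^{1/(p-1)}, k ≥ 1, and A : ℝᴺ → [0,∞) a function such that A(x) ≤ C₀|x - x₀|^k for |x - x₀| < r, where A(x₀) = 0. Define U₀(t,x) = κ(t + A(x))^{-2/(p-1)}. Then there exist constants c, C > 0 (depending on r) such that for all t ∈ (0,1], c t^{-2/(p-1) + N/(2k)} ≤ ‖U₀(t,·)‖_{L²(|x-x₀|<r)} ≤ C t^{-2/(p-1)}. -/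
open Real MeasureTheory

private lemma sq_rpow' {x e : ℝ} (hx : 0 < x) : (x ^ e) ^ 2 = x ^ (2 * e) := by
  rw [sq, ← Real.rpow_add hx]; ring_nf

theorem U0_L2_two_sided (N : ℕ) (hN : 1 ≤ N) (p : ℝ) (hp : 1 < p)
    (k : ℝ) (hk : 1 ≤ k) (hpk : (N : ℝ) / k < 4 / (p - 1))
    (κ : ℝ) (hκ : κ = (2 * (p + 1) / (p - 1) ^ 2) ^ (1 / (p - 1)))
    (x₀ : EuclideanSpace ℝ (Fin N)) (r : ℝ) (hr : 0 < r)
    (A : EuclideanSpace ℝ (Fin N) → ℝ) (hAcont : Continuous A) (hA0 : ∀ x, 0 ≤ A x)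
    (hAx₀ : A x₀ = 0)
    (C₀ : ℝ) (hC₀ : 0 < C₀) (hAup : ∀ x, dist x x₀ < r → A x ≤ C₀ * dist x x₀ ^ k)
    (U₀ : ℝ → EuclideanSpace ℝ (Fin N) → ℝ)
    (hU₀ : ∀ t x, U₀ t x = κ * (t + A x) ^ (-2 / (p - 1))) :
    ∃ c > 0, ∃ C > 0, ∀ t ∈ Set.Ioc (0:ℝ) 1,
      c * t ^ (-2 / (p - 1) + (N : ℝ) / (2 * k))
        ≤ (∫ x in Metric.ball x₀ r, (U₀ t x) ^ 2) ^ ((1:ℝ)/2) ∧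
      (∫ x in Metric.ball x₀ r, (U₀ t x) ^ 2) ^ ((1:ℝ)/2)
        ≤ C * t ^ (-2 / (p - 1)) := by
  have hp1 : (0:ℝ) < p - 1 := by linarith
  have hk0 : (0:ℝ) < k := lt_of_lt_of_le one_pos hk
  have hκpos : 0 < κ := by
    rw [hκ]; exact Real.rpow_pos_of_pos (by positivity) _
  set e : ℝ := -2 / (p - 1) with he
  have heneg : e < 0 := div_neg_of_neg_of_pos (by norm_num) hp1
  haveI : Nonempty (Fin N) := ⟨⟨0, hN⟩⟩
  haveI : Nontrivial (EuclideanSpace ℝ (Fin N)) := by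
    refine ⟨0, EuclideanSpace.single ⟨0, hN⟩ 1, fun h => ?_⟩
    have := congrArg (fun v : EuclideanSpace ℝ (Fin N) => v ⟨0, hN⟩) h.symm
    simp [EuclideanSpace.single] at this
  set B : ℝ := (volume (Metric.ball (0 : EuclideanSpace ℝ (Fin N)) 1)).toReal with hBdef
  have hB : 0 < B :=
    ENNReal.toReal_pos (Metric.measure_ball_pos volume 0 one_pos).ne' measure_ball_lt_top.ne
  set m : ℝ := min r (C₀ ^ (-(1/k))) with hmdef
  have hm : 0 < m := lt_min hr (Real.rpow_pos_of_pos hC₀ _)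
  have hmr : m ≤ r := min_le_left _ _
  have hmC : C₀ * m ^ k ≤ 1 := by
    have h1 : m ^ k ≤ (C₀ ^ (-(1/k))) ^ k :=
      Real.rpow_le_rpow hm.le (min_le_right _ _) hk0.le
    have h2 : (C₀ ^ (-(1/k))) ^ k = C₀⁻¹ := by
      rw [← Real.rpow_mul hC₀.le]
      have : -(1/k) * k = -1 := by field_simp
      rw [this, Real.rpow_neg_one]
    rw [h2] at h1
    calc C₀ * m ^ k ≤ C₀ * C₀⁻¹ := by
          exact mul_le_mul_of_nonneg_left h1 hC₀.le
      _ = 1 := mul_inv_cancel₀ hC₀.ne'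
  set Q : ℝ := m ^ N * B with hQdef
  have hQ : 0 < Q := by positivity
  set V : ℝ := (volume (Metric.ball x₀ r)).toReal with hVdef
  have hV : 0 < V :=
    ENNReal.toReal_pos (Metric.measure_ball_pos volume x₀ hr).ne' measure_ball_lt_top.ne
  refine ⟨κ * 2 ^ e * Real.sqrt Q, by positivity, κ * Real.sqrt V, by positivity, ?_⟩
  rintro t ⟨ht0, ht1⟩
  -- basic facts about the integrand
  have hcont : Continuous fun x => (U₀ t x) ^ 2 := by
    have h1 : Continuous fun x : EuclideanSpace ℝ (Fin N) => (t + A x) ^ e := by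
      apply (continuous_const.add hAcont).rpow_const
      intro x
      exact Or.inl (by have := hA0 x; exact (by linarith : (0:ℝ) < t + A x).ne')
    have : Continuous fun x => U₀ t x := by
      simp only [hU₀, ← he]
      exact continuous_const.mul h1
    exact this.pow 2
  have hnonneg : ∀ x, 0 ≤ (U₀ t x) ^ 2 := fun x => sq_nonneg _
  have hint : IntegrableOn (fun x => (U₀ t x) ^ 2) (Metric.ball x₀ r) := by
    exact (hcont.locallyIntegrable.integrableOn_isCompact
      (isCompact_closedBall x₀ r)).mono_set Metric.ball_subset_closedBall
  have hI0 : 0 ≤ ∫ x in Metric.ball x₀ r, (U₀ t x) ^ 2 :=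
    setIntegral_nonneg measurableSet_ball fun x _ => hnonneg x
  set I : ℝ := ∫ x in Metric.ball x₀ r, (U₀ t x) ^ 2 with hIdef
  constructor
  · -- lower bound
    set ρ : ℝ := m * t ^ (1/k) with hρdef
    have htk : 0 < t ^ (1/k) := Real.rpow_pos_of_pos ht0 _
    have hρ0 : 0 < ρ := by positivity
    have htk1 : t ^ (1/k) ≤ 1 := Real.rpow_le_one ht0.le ht1 (by positivity)
    have hρr : ρ ≤ r := by
      calc ρ ≤ m * 1 := by nlinarith
        _ ≤ r := by linarith
    -- pointwise lower bound on the small ball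
    set a : ℝ := κ * (2 * t) ^ e with hadef
    have ha0 : 0 < a := by
      have := Real.rpow_pos_of_pos (by linarith : (0:ℝ) < 2 * t) e
      positivity
    have hlow : ∀ x ∈ Metric.ball x₀ ρ, a ^ 2 ≤ (U₀ t x) ^ 2 := by
      intro x hx
      rw [Metric.mem_ball] at hx
      have hxr : dist x x₀ < r := lt_of_lt_of_le hx hρr
      have hAle : A x ≤ t := by
        have h1 : dist x x₀ ^ k ≤ ρ ^ k :=
          Real.rpow_le_rpow dist_nonneg hx.le hk0.le
        have h2 : ρ ^ k = m ^ k * t := by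
          rw [hρdef, Real.mul_rpow hm.le htk.le, ← Real.rpow_mul ht0.le]
          rw [one_div_mul_cancel hk0.ne', Real.rpow_one]
        have h3 : C₀ * (m ^ k * t) ≤ t := by
          have : C₀ * m ^ k * t ≤ 1 * t := mul_le_mul_of_nonneg_right hmC ht0.le
          linarith [this]
        calc A x ≤ C₀ * dist x x₀ ^ k := hAup x hxr
          _ ≤ C₀ * ρ ^ k := mul_le_mul_of_nonneg_left h1 hC₀.le
          _ = C₀ * (m ^ k * t) := by rw [h2]
          _ ≤ t := h3
      have hsum : t + A x ≤ 2 * t := by linarith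
      have hsum0 : 0 < t + A x := by have := hA0 x; linarith
      have hb : (2 * t) ^ e ≤ (t + A x) ^ e :=
        Real.rpow_le_rpow_of_nonpos hsum0 hsum heneg.le
      have : a ≤ U₀ t x := by
        rw [hU₀, hadef]
        exact mul_le_mul_of_nonneg_left hb hκpos.le
      exact pow_le_pow_left₀ ha0.le this 2
    have hvol : (volume (Metric.ball x₀ ρ)).toReal = ρ ^ N * B := by
      rw [Measure.addHaar_ball volume x₀ hρ0.le, finrank_euclideanSpace_fin]
      rw [ENNReal.toReal_mul, ENNReal.toReal_ofReal (by positivity)]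
    have hstep1 : a ^ 2 * (ρ ^ N * B) ≤ ∫ x in Metric.ball x₀ ρ, (U₀ t x) ^ 2 := by
      rw [← hvol]
      exact setIntegral_ge_of_const_le_real measurableSet_ball measure_ball_lt_top.ne hlow
        (hint.mono_set (Metric.ball_subset_ball hρr))
    have hstep2 : (∫ x in Metric.ball x₀ ρ, (U₀ t x) ^ 2) ≤ I := by
      apply setIntegral_mono_set hint
      · exact Filter.Eventually.of_forall fun x => hnonneg x
      · exact HasSubset.Subset.eventuallyLE (Metric.ball_subset_ball hρr)
    have hkey : (κ * 2 ^ e * Real.sqrt Q * t ^ (e + (N : ℝ) / (2 * k))) ^ 2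
        ≤ I := by
      refine le_trans (le_of_eq ?_) (le_trans hstep1 hstep2)
      have h2t : (2 * t) ^ e = 2 ^ e * t ^ e := Real.mul_rpow (by norm_num) ht0.le
      have hρN : ρ ^ N = m ^ N * t ^ ((N : ℝ) / k) := by
        rw [hρdef, mul_pow, ← Real.rpow_natCast (t ^ (1/k)) N, ← Real.rpow_mul ht0.le]
        ring_nf
      have hte : (t ^ (e + (N : ℝ) / (2 * k))) ^ 2 = t ^ (2 * e) * t ^ ((N:ℝ)/k) := by
        rw [sq_rpow' ht0, ← Real.rpow_add ht0]
        congr 1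
        field_simp
      have hL : (κ * 2 ^ e * Real.sqrt Q * t ^ (e + (N : ℝ) / (2 * k))) ^ 2
          = κ ^ 2 * ((2:ℝ) ^ e) ^ 2 * Q * (t ^ (2 * e) * t ^ ((N:ℝ)/k)) := by
        rw [show (κ * 2 ^ e * Real.sqrt Q * t ^ (e + (N : ℝ) / (2 * k))) ^ 2
            = κ ^ 2 * ((2:ℝ) ^ e) ^ 2 * Real.sqrt Q ^ 2 * (t ^ (e + (N : ℝ) / (2 * k))) ^ 2
            from by ring, Real.sq_sqrt hQ.le, hte]
      have hR : a ^ 2 * (ρ ^ N * B)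
          = κ ^ 2 * ((2:ℝ) ^ e) ^ 2 * Q * (t ^ (2 * e) * t ^ ((N:ℝ)/k)) := by
        rw [hQdef, hadef, h2t, hρN, ← sq_rpow' ht0]
        ring
      rw [hL, ← hR]
    -- take square roots
    have h1 : κ * 2 ^ e * Real.sqrt Q * t ^ (e + (N : ℝ) / (2 * k)) ≤ Real.sqrt I := by
      have hpos : 0 ≤ κ * 2 ^ e * Real.sqrt Q * t ^ (e + (N : ℝ) / (2 * k)) := by
        have := Real.rpow_pos_of_pos ht0 (e + (N : ℝ) / (2 * k))
        have h2 := Real.rpow_pos_of_pos (by norm_num : (0:ℝ) < 2) e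
        positivity
      calc κ * 2 ^ e * Real.sqrt Q * t ^ (e + (N : ℝ) / (2 * k))
          = Real.sqrt ((κ * 2 ^ e * Real.sqrt Q * t ^ (e + (N : ℝ) / (2 * k))) ^ 2) :=
            (Real.sqrt_sq hpos).symm
        _ ≤ Real.sqrt I := Real.sqrt_le_sqrt hkey
    rw [← Real.sqrt_eq_rpow]
    exact h1
  · -- upper bound
    set b : ℝ := κ * t ^ e with hbdef
    have hb0 : 0 < b := by
      have := Real.rpow_pos_of_pos ht0 e; positivity
    have hup : ∀ x ∈ Metric.ball x₀ r, (U₀ t x) ^ 2 ≤ b ^ 2 := by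
      intro x _
      have hsum0 : 0 < t := ht0
      have h1 : (t + A x) ^ e ≤ t ^ e :=
        Real.rpow_le_rpow_of_nonpos ht0 (by linarith [hA0 x]) heneg.le
      have h2 : U₀ t x ≤ b := by
        rw [hU₀, hbdef]
        exact mul_le_mul_of_nonneg_left h1 hκpos.le
      have h3 : 0 ≤ U₀ t x := by
        rw [hU₀]
        have : (0:ℝ) < t + A x := by linarith [hA0 x]
        positivity
      exact pow_le_pow_left₀ h3 h2 2
    have hIle : I ≤ b ^ 2 * V := by
      calc I ≤ ∫ _ in Metric.ball x₀ r, b ^ 2 :=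
            setIntegral_mono_on hint ((integrableOn_const_iff (C := b ^ 2)).mpr
              (Or.inr measure_ball_lt_top)) measurableSet_ball hup
        _ = b ^ 2 * V := by rw [setIntegral_const, smul_eq_mul, mul_comm]; rfl
    have hkey : I ≤ (κ * Real.sqrt V * t ^ e) ^ 2 := by
      refine hIle.trans (le_of_eq ?_)
      rw [hbdef, show (κ * Real.sqrt V * t ^ e) ^ 2
          = κ ^ 2 * Real.sqrt V ^ 2 * (t ^ e) ^ 2 from by ring, Real.sq_sqrt hV.le]
      ring
    rw [← Real.sqrt_eq_rpow]
    calc Real.sqrt I ≤ Real.sqrt ((κ * Real.sqrt V * t ^ e) ^ 2) := Real.sqrt_le_sqrt hkey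
      _ = κ * Real.sqrt V * t ^ e := by
          apply Real.sqrt_sq
          have := Real.rpow_pos_of_pos ht0 e
          positivity
end
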